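/- Let p ∈ [1/4, 1], n ≥ 17, β < 2^{−15/2}, and c, α > 0 constants with cα·n^p ≥ 24·log(2/β). Then ∫_{n−1}^∞ exp(−cα·t^p/48) dt ≤ (6n/p)·exp(−cα·n^p/51). -/

import Mathlib

open MeasureTheory Real Filter


lemma aux_tendsto (A p q : ℝ) (hA : 0 < A) (hp : 0 < p) :
    Tendsto (fun t : ℝ => Real.exp (-(A * t ^ p)) * t ^ q) atTop (nhds 0) := by
  have h1 := tendsto_rpow_mul_exp_neg_mul_atTop_nhds_zero (q / p) A hA
  have h3 := h1.comp (tendsto_rpow_atTop hp)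
  apply h3.congr'
  filter_upwards [eventually_gt_atTop (0:ℝ)] with t ht
  simp only [Function.comp_apply]
  rw [← Real.rpow_mul ht.le, mul_div_cancel₀ _ (ne_of_gt hp)]
  rw [neg_mul, mul_comm]

lemma aux_deriv (A p : ℝ) (hA : 0 < A) (hp0 : 0 < p) (t : ℝ) (ht : 0 < t) :
    HasDerivAt (fun s : ℝ => -(5/(p*A) * (Real.exp (-(A * s ^ p)) * (s ^ (1-p) + (1-p)/(p*A) * s ^ (1-2*p)))))
      (5/(p*A) * (Real.exp (-(A * t ^ p)) * (A*p - (1-p)/(p*A)*(1-2*p) * t ^ (-(2*p))))) t := by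
  have hrp : HasDerivAt (fun s : ℝ => s ^ p) (p * t ^ (p - 1)) t :=
    Real.hasDerivAt_rpow_const (Or.inl ht.ne')
  have d2 : HasDerivAt (fun s : ℝ => Real.exp (-(A * s ^ p)))
      (Real.exp (-(A * t ^ p)) * -(A * (p * t ^ (p-1)))) t := ((hrp.const_mul A).neg).exp
  have dp1 : HasDerivAt (fun s : ℝ => s ^ (1-p)) ((1-p) * t ^ (1-p-1)) t :=
    Real.hasDerivAt_rpow_const (Or.inl ht.ne')
  have dp2 : HasDerivAt (fun s : ℝ => s ^ (1-2*p)) ((1-2*p) * t ^ (1-2*p-1)) t :=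
    Real.hasDerivAt_rpow_const (Or.inl ht.ne')
  have dpoly := dp1.add (dp2.const_mul ((1-p)/(p*A)))
  have d := ((d2.mul dpoly).const_mul (5/(p*A))).neg
  refine d.congr_deriv ?_
  simp only [Pi.add_apply]
  have hT : (0:ℝ) < t ^ p := Real.rpow_pos_of_pos ht p
  have e0 : t ^ (p-1) = t ^ p * t⁻¹ := by
    rw [Real.rpow_sub ht, Real.rpow_one, div_eq_mul_inv]
  have e1 : t ^ (1-p) = t * (t ^ p)⁻¹ := by
    rw [Real.rpow_sub ht, Real.rpow_one, div_eq_mul_inv]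
  have e2 : t ^ (1-2*p) = t * (t ^ p * t ^ p)⁻¹ := by
    rw [show (1:ℝ)-2*p = 1-p-p by ring, Real.rpow_sub ht, Real.rpow_sub ht, Real.rpow_one]
    field_simp
  have e3 : t ^ (1-p-1) = (t ^ p)⁻¹ := by
    rw [show (1:ℝ)-p-1 = -p by ring, Real.rpow_neg ht.le]
  have e4 : t ^ (1-2*p-1) = (t ^ p * t ^ p)⁻¹ := by
    rw [show (1:ℝ)-2*p-1 = -(p+p) by ring, Real.rpow_neg ht.le, Real.rpow_add ht]
  have e5 : t ^ (-(2*p)) = (t ^ p * t ^ p)⁻¹ := by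
    rw [show -(2*p) = -(p+p) by ring, Real.rpow_neg ht.le, Real.rpow_add ht]
  rw [e0, e1, e2, e3, e4, e5]
  field_simp
  ring

set_option maxHeartbeats 1000000 in
/-- For `p ∈ [1/4,1]`, integer `n ≥ 17`, `β ∈ (0, 2^{−15/2})`, and
constants `c, α > 0` with `cα·n^p ≥ 24 log(2/β)`,
`∫_{n−1}^∞ exp(−cα t^p/48) dt ≤ (6n/p)·exp(−cα n^p/51)`. -/
theorem integral_exp_neg_pow_bound (p c α β : ℝ) (n : ℕ)
    (hp1 : 1 / 4 ≤ p) (hp2 : p ≤ 1) (hn : 17 ≤ n)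
    (hβ0 : 0 < β) (hβ1 : β < 2 ^ (-(15 : ℝ) / 2))
    (hc : 0 < c) (hα : 0 < α)
    (hbig : 24 * Real.log (2 / β) ≤ c * α * (n : ℝ) ^ p) :
    (∫ t in Set.Ioi ((n : ℝ) - 1), Real.exp (-(c * α * t ^ p / 48)))
      ≤ 6 * (n : ℝ) / p * Real.exp (-(c * α * (n : ℝ) ^ p / 51)) := by
  have hp0 : 0 < p := lt_of_lt_of_le (by norm_num) hp1
  have hn17 : (17:ℝ) ≤ (n:ℝ) := by exact_mod_cast hn
  set m : ℝ := (n:ℝ) - 1 with hmdef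
  have hm16 : (16:ℝ) ≤ m := by simp only [hmdef]; linarith
  have hm0 : (0:ℝ) < m := by linarith
  set A : ℝ := c * α / 48 with hAdef
  have hA : 0 < A := by positivity
  set M : ℝ := m ^ p with hMdef
  have hM : 0 < M := Real.rpow_pos_of_pos hm0 p
  set N : ℝ := (n:ℝ) ^ p with hNdef
  have hN : 0 < N := Real.rpow_pos_of_pos (by linarith) p
  -- basic comparison (n-1)^p ≥ (16/17) n^p
  have hMN : 16/17 * N ≤ M := by
    have h1 : (16/17 : ℝ) * (n:ℝ) ≤ m := by simp only [hmdef]; nlinarith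
    have h2 : ((16/17 : ℝ) * (n:ℝ)) ^ p ≤ m ^ p :=
      Real.rpow_le_rpow (by positivity) h1 hp0.le
    have h3 : ((16/17 : ℝ) * (n:ℝ)) ^ p = (16/17:ℝ)^p * N := by
      rw [hNdef, Real.mul_rpow (by norm_num) (by linarith)]
    have h4 : (16/17 : ℝ) ≤ (16/17:ℝ)^p := by
      have := Real.rpow_le_rpow_of_exponent_ge (x := (16/17:ℝ)) (by norm_num) (by norm_num) hp2
      rwa [Real.rpow_one] at this
    have h5 : (16/17:ℝ) * N ≤ (16/17:ℝ)^p * N := by nlinarith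
    calc (16/17:ℝ) * N ≤ (16/17:ℝ)^p * N := h5
      _ = ((16/17 : ℝ) * (n:ℝ)) ^ p := h3.symm
      _ ≤ M := h2
  -- log bounds
  have hlogβ : (17/2) * Real.log 2 ≤ Real.log (2/β) := by
    have hb2 : (2:ℝ) ^ ((17:ℝ)/2) ≤ 2 / β := by
      rw [le_div_iff₀ hβ0]
      have h1 : (2:ℝ) ^ ((17:ℝ)/2) * β < (2:ℝ) ^ ((17:ℝ)/2) * (2:ℝ) ^ (-(15:ℝ)/2) := by
        apply mul_lt_mul_of_pos_left hβ1 (Real.rpow_pos_of_pos two_pos _)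
      have h2 : (2:ℝ) ^ ((17:ℝ)/2) * (2:ℝ) ^ (-(15:ℝ)/2) = 2 := by
        rw [← Real.rpow_add two_pos]; norm_num
      nlinarith
    calc (17/2) * Real.log 2 = Real.log ((2:ℝ) ^ ((17:ℝ)/2)) := (Real.log_rpow two_pos _).symm
      _ ≤ Real.log (2/β) := Real.log_le_log (by positivity) hb2
  have hX : 204 * Real.log 2 ≤ c * α * N := by
    calc 204 * Real.log 2 = 24 * ((17/2) * Real.log 2) := by ring
      _ ≤ 24 * Real.log (2/β) := by linarith
      _ ≤ c * α * N := hbig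
  have hAM51 : c * α * N / 51 ≤ A * M := by
    calc c * α * N / 51 = A * (16/17 * N) := by rw [hAdef]; ring
      _ ≤ A * M := by nlinarith
  have hlog2 : (0.6931471803:ℝ) < Real.log 2 := Real.log_two_gt_d9
  have hAM : (2.772:ℝ) ≤ A * M := by linarith
  -- the comparison function and its derivative
  set g : ℝ → ℝ := fun s =>
    -(5/(p*A) * (Real.exp (-(A * s ^ p)) * (s ^ (1-p) + (1-p)/(p*A) * s ^ (1-2*p)))) with hgdef
  set g' : ℝ → ℝ := fun s =>
    5/(p*A) * (Real.exp (-(A * s ^ p)) * (A*p - (1-p)/(p*A)*(1-2*p) * s ^ (-(2*p)))) with hg'def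
  have hderiv : ∀ t ∈ Set.Ici m, HasDerivAt g (g' t) t := fun t ht =>
    aux_deriv A p hA hp0 t (lt_of_lt_of_le hm0 ht)
  -- pointwise bound
  have hfg : ∀ t ∈ Set.Ioi m, Real.exp (-(c * α * t ^ p / 48)) ≤ g' t := by
    intro t ht
    have ht0 : 0 < t := lt_trans hm0 ht
    have hfeq : -(c * α * t ^ p / 48) = -(A * t ^ p) := by rw [hAdef]; ring
    rw [hfeq, hg'def]
    have hT : 0 < t ^ p := Real.rpow_pos_of_pos ht0 p
    have ht2p : t ^ (-(2*p)) = (t ^ p * t ^ p)⁻¹ := by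
      rw [show -(2*p) = -(p+p) by ring, Real.rpow_neg ht0.le, Real.rpow_add ht0]
    have hkey : (1-p)*(1-2*p) * t ^ (-(2*p)) ≤ 4/5 * (p*A)^2 := by
      rcases le_or_gt (1-2*p) 0 with hcase | hcase
      · have h1 : 0 < t ^ (-(2*p)) := Real.rpow_pos_of_pos ht0 _
        have h2 : (0:ℝ) ≤ (1-p)*(2*p-1) :=
          mul_nonneg (by linarith) (by linarith)
        nlinarith [mul_nonneg h2 h1.le, sq_nonneg (p*A)]
      · have hMt : M ≤ t ^ p := by
          rw [hMdef]; exact Real.rpow_le_rpow hm0.le (le_of_lt ht) hp0.le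
        have h1 : t ^ (-(2*p)) ≤ (M*M)⁻¹ := by
          rw [ht2p]
          apply inv_anti₀ (by positivity)
          nlinarith
        have h2 : (1-p)*(1-2*p) ≤ 4/5 * (p*A)^2 * (M*M) := by
          have hsq : (2.772:ℝ)^2 ≤ (A*M)^2 := by nlinarith
          have hprod : p^2 * (2.772:ℝ)^2 ≤ p^2 * (A*M)^2 :=
            mul_le_mul_of_nonneg_left hsq (sq_nonneg p)
          have heq : 4/5 * (p*A)^2 * (M*M) = 4/5 * (p^2 * (A*M)^2) := by ring
          rw [heq]
          nlinarith [sq_nonneg (p - 1/4), hp1]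
        have h3 : (1-p)*(1-2*p) * t ^ (-(2*p)) ≤ (1-p)*(1-2*p) * (M*M)⁻¹ := by
          apply mul_le_mul_of_nonneg_left h1
          nlinarith
        calc (1-p)*(1-2*p) * t ^ (-(2*p)) ≤ (1-p)*(1-2*p) * (M*M)⁻¹ := h3
          _ ≤ 4/5 * (p*A)^2 := by
            rw [← div_eq_mul_inv, div_le_iff₀ (by positivity)]
            linarith
    have hS : 1 ≤ 5/(p*A) * (A*p - (1-p)/(p*A)*(1-2*p) * t ^ (-(2*p))) := by
      have expand : 5/(p*A) * (A*p - (1-p)/(p*A)*(1-2*p) * t ^ (-(2*p)))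
          = 5 - 5*((1-p)*(1-2*p) * t ^ (-(2*p)))/(p*A)^2 := by
        field_simp
      rw [expand]
      have h4 : 5*((1-p)*(1-2*p) * t ^ (-(2*p)))/(p*A)^2 ≤ 4 := by
        rw [div_le_iff₀ (by positivity)]
        linarith
      linarith
    calc Real.exp (-(A * t ^ p)) = Real.exp (-(A * t ^ p)) * 1 := (mul_one _).symm
      _ ≤ Real.exp (-(A * t ^ p)) * (5/(p*A) * (A*p - (1-p)/(p*A)*(1-2*p) * t ^ (-(2*p)))) :=
          mul_le_mul_of_nonneg_left hS (Real.exp_pos _).le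
      _ = 5/(p*A) * (Real.exp (-(A * t ^ p)) * (A*p - (1-p)/(p*A)*(1-2*p) * t ^ (-(2*p)))) := by
          ring
  have hg'nonneg : ∀ t ∈ Set.Ioi m, 0 ≤ g' t := fun t ht =>
    le_trans (Real.exp_pos _).le (hfg t ht)
  -- tendsto
  have htend : Tendsto g atTop (nhds 0) := by
    have t1 := aux_tendsto A p (1-p) hA hp0
    have t2 := aux_tendsto A p (1-2*p) hA hp0
    have t3 := (((t1.add (t2.const_mul ((1-p)/(p*A)))).const_mul (5/(p*A))).neg)
    have h0 : -(5/(p*A) * ((0:ℝ) + (1-p)/(p*A) * 0)) = 0 := by ring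
    rw [h0] at t3
    apply t3.congr
    intro t
    simp only [hgdef]
    ring
  -- the integral identity
  have hint : ∫ t in Set.Ioi m, g' t = 0 - g m :=
    integral_Ioi_of_hasDerivAt_of_nonneg' hderiv hg'nonneg htend
  have hintg' : IntegrableOn g' (Set.Ioi m) :=
    integrableOn_Ioi_deriv_of_nonneg' hderiv hg'nonneg htend
  -- integrability of f
  have hfmeas : AEStronglyMeasurable (fun t : ℝ => Real.exp (-(c * α * t ^ p / 48)))
      (volume.restrict (Set.Ioi m)) := by
    apply Continuous.aestronglyMeasurable
    apply Real.continuous_exp.comp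
    apply Continuous.neg
    apply Continuous.div_const
    apply Continuous.mul continuous_const
    exact continuous_iff_continuousAt.2 fun x => Real.continuousAt_rpow_const x p (Or.inr hp0.le)
  have hintf : IntegrableOn (fun t : ℝ => Real.exp (-(c * α * t ^ p / 48))) (Set.Ioi m) := by
    apply hintg'.mono' hfmeas
    rw [ae_restrict_iff' measurableSet_Ioi]
    apply ae_of_all
    intro t ht
    rw [Real.norm_eq_abs, abs_of_pos (Real.exp_pos _)]
    exact hfg t ht
  -- final endpoint evaluation and bound
  have e1m : m ^ (1-p) = m * M⁻¹ := by
    rw [Real.rpow_sub hm0, Real.rpow_one, div_eq_mul_inv, hMdef]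
  have e2m : m ^ (1-2*p) = m * (M*M)⁻¹ := by
    rw [show (1:ℝ)-2*p = 1-p-p by ring, Real.rpow_sub hm0, Real.rpow_sub hm0, Real.rpow_one,
      hMdef]
    field_simp
  have hgm : 0 - g m = (5/(p*A) * (m*M⁻¹ + (1-p)/(p*A) * (m*(M*M)⁻¹))) * Real.exp (-(A*M)) := by
    simp only [hgdef]
    rw [e1m, e2m, ← hMdef]
    ring
  have hmn : m ≤ (n:ℝ) := by simp only [hmdef]; linarith
  have hcoef : 5/(p*A) * (m*M⁻¹ + (1-p)/(p*A) * (m*(M*M)⁻¹)) ≤ 6 * (n:ℝ) / p := by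
    have hupos : (0:ℝ) < A*M := mul_pos hA hM
    have expand : 5/(p*A) * (m*M⁻¹ + (1-p)/(p*A) * (m*(M*M)⁻¹))
        = (5*m*(p*(A*M)) + 5*(1-p)*m) / (p^2*(A*M)^2) := by
      field_simp
    rw [expand, div_le_div_iff₀ (by positivity) hp0]
    have h6u : (0:ℝ) ≤ 6*(A*M)^2 - 5*(A*M) - 20 := by nlinarith
    nlinarith [mul_nonneg (mul_nonneg hm0.le (sq_nonneg p)) h6u,
      mul_nonneg (mul_nonneg (sub_nonneg.2 hmn) (sq_nonneg p)) (sq_nonneg (A*M)),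
      mul_nonneg (mul_nonneg hm0.le hp0.le) (by linarith : (0:ℝ) ≤ 25*p - 5)]
  have hexp : Real.exp (-(A*M)) ≤ Real.exp (-(c * α * N / 51)) := by
    apply Real.exp_le_exp.2
    linarith
  calc (∫ t in Set.Ioi m, Real.exp (-(c * α * t ^ p / 48)))
      ≤ ∫ t in Set.Ioi m, g' t :=
        setIntegral_mono_on hintf hintg' measurableSet_Ioi hfg
    _ = 0 - g m := hint
    _ = (5/(p*A) * (m*M⁻¹ + (1-p)/(p*A) * (m*(M*M)⁻¹))) * Real.exp (-(A*M)) := hgm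
    _ ≤ 6 * (n:ℝ) / p * Real.exp (-(c * α * N / 51)) := by
        apply mul_le_mul hcoef hexp (Real.exp_pos _).le
        exact div_nonneg (by positivity) hp0.le
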